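/- Let G be the mGG CRM total mass with α = 1, τ = 0, parameters β > 0, c > 0, η > 0. Then E[G] = η c (1 − β + β log β)/(β log² β) for β ≠ 1 and E[G] = ηc/2 for β = 1. -/

import Mathlib

open Real MeasureTheory intervalIntegral

/-- Lévy intensity ρ_mSt(w; 1, 0) of the mixed stable CRM with α = 1, τ = 0. -/
noncomputable def rhoMSt10 (w : ℝ) : ℝ :=
  ∫ s in (0:ℝ)..1, (s / Real.Gamma (1 - s)) * w ^ (-1 - s)

/-- Lévy intensity ρ_mGG(w; 1, 0, β, c, η) of the mGG CRM. -/
noncomputable def rhoMGG10 (β c η w : ℝ) : ℝ :=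
  (η / c) * rhoMSt10 (w / c) * Real.exp (-β * w / c)

namespace Stmt7Aux

/-- The double-integral integrand. -/
noncomputable def F (β c η w s : ℝ) : ℝ :=
  ((η / c) * Real.exp (-β * w / c) * w) *
    ((s / Real.Gamma (1 - s)) * (w / c) ^ (-1 - s))

variable {β c η : ℝ}

lemma F_eq (hβ : 0 < β) (hc : 0 < c) {s : ℝ} (hs : s ∈ Set.Ioo (0:ℝ) 1)
    {w : ℝ} (hw : 0 < w) :
    F β c η w s = ((η / c) * (s / Real.Gamma (1 - s)) * c ^ (1 + s)) *
      (w ^ ((1 - s) - 1) * Real.exp (-(β / c * w))) := by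
  have h1 : (w / c) ^ (-1 - s) = w ^ (-(1 + s)) * c ^ (1 + s) := by
    rw [show (-1 - s : ℝ) = -(1 + s) by ring, Real.div_rpow hw.le hc.le,
      Real.rpow_neg hc.le, div_eq_mul_inv, inv_inv]
  have h2 : w * w ^ (-(1 + s)) = w ^ ((1 - s) - 1) := by
    rw [show ((1 - s) - 1 : ℝ) = 1 + -(1 + s) by ring, Real.rpow_add hw,
      Real.rpow_one]
  have h3 : Real.exp (-β * w / c) = Real.exp (-(β / c * w)) := by ring_nf
  rw [F, h1, h3]
  rw [← h2]
  ring

lemma integral_F (hβ : 0 < β) (hc : 0 < c) (hη : 0 < η) {s : ℝ}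
    (hs : s ∈ Set.Ioo (0:ℝ) 1) :
    ∫ w in Set.Ioi (0:ℝ), F β c η w s = η * c * (s * β ^ (s - 1)) := by
  have hΓ : 0 < Real.Gamma (1 - s) := Real.Gamma_pos_of_pos (by linarith [hs.2])
  have hbc : 0 < β / c := div_pos hβ hc
  rw [setIntegral_congr_fun measurableSet_Ioi
    (fun w hw => F_eq hβ hc hs (Set.mem_Ioi.mp hw)),
    MeasureTheory.integral_const_mul _ _,
    Real.integral_rpow_mul_exp_neg_mul_Ioi (by linarith [hs.2] : (0:ℝ) < 1 - s) hbc]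
  have h4 : (1 / (β / c)) ^ (1 - s) = c ^ (1 - s) * β ^ (s - 1) := by
    rw [one_div, inv_div, Real.div_rpow hc.le hβ.le, div_eq_mul_inv,
      ← Real.rpow_neg hβ.le, neg_sub]
  rw [h4]
  have h5 : c ^ (1 + s) * c ^ (1 - s) = c * c := by
    rw [← Real.rpow_add hc, show (1 + s) + (1 - s) = ((2:ℕ):ℝ) by push_cast; ring,
      Real.rpow_natCast]
    ring
  field_simp
  linear_combination s * h5

lemma integrableOn_F (hβ : 0 < β) (hc : 0 < c) {s : ℝ}
    (hs : s ∈ Set.Ioo (0:ℝ) 1) :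
    IntegrableOn (fun w => F β c η w s) (Set.Ioi (0:ℝ)) := by
  have hbc : 0 < β / c := div_pos hβ hc
  have h : IntegrableOn (fun x : ℝ => ((η / c) * (s / Real.Gamma (1 - s)) * c ^ (1 + s)) *
      (x ^ ((1 - s) - 1) * Real.exp (-(β / c) * x ^ (1:ℝ)))) (Set.Ioi (0:ℝ)) :=
    (integrableOn_rpow_mul_exp_neg_mul_rpow
      (show (-1:ℝ) < (1 - s) - 1 by simp [hs.2]) one_pos hbc).const_mul _
  refine h.congr_fun (fun w hw => ?_) measurableSet_Ioi
  rw [F_eq hβ hc hs (Set.mem_Ioi.mp hw)]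
  congr 2
  simp only [Real.rpow_one]
  ring_nf

lemma F_nonneg (hβ : 0 < β) (hc : 0 < c) (hη : 0 < η) {s : ℝ}
    (hs : s ∈ Set.Ioo (0:ℝ) 1) {w : ℝ} (hw : 0 < w) :
    0 ≤ F β c η w s := by
  have hΓ : 0 < Real.Gamma (1 - s) := Real.Gamma_pos_of_pos (by linarith [hs.2])
  have h1 : (0:ℝ) ≤ (w / c) ^ (-1 - s) := Real.rpow_nonneg (by positivity) _
  have := Real.exp_pos (-β * w / c)
  have := hs.1
  unfold F
  positivity

lemma continuousOn_F (hβ : 0 < β) (hc : 0 < c) :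
    ContinuousOn (fun p : ℝ × ℝ => F β c η p.1 p.2)
      (Set.Ioi (0:ℝ) ×ˢ Set.Ioo (0:ℝ) 1) := by
  intro p hp
  obtain ⟨hp1, hp2⟩ := hp
  apply ContinuousAt.continuousWithinAt
  have hΓne : Real.Gamma (1 - p.2) ≠ 0 :=
    (Real.Gamma_pos_of_pos (by linarith [hp2.2])).ne'
  have hΓcont : ContinuousAt (fun q : ℝ × ℝ => Real.Gamma (1 - q.2)) p := by
    have hd : DifferentiableAt ℝ Real.Gamma (1 - p.2) := by
      refine Real.differentiableAt_Gamma (fun m => ?_)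
      have : (0:ℝ) < 1 - p.2 := by linarith [hp2.2]
      have hm : (-(m:ℝ)) ≤ 0 := neg_nonpos.mpr (Nat.cast_nonneg m)
      exact ne_of_gt (lt_of_le_of_lt hm this)
    have hin : ContinuousAt (fun q : ℝ × ℝ => (1:ℝ) - q.2) p := by fun_prop
    exact ContinuousAt.comp (f := fun q : ℝ × ℝ => (1:ℝ) - q.2) hd.continuousAt hin
  have h1 : ContinuousAt (fun q : ℝ × ℝ =>
      (η / c) * Real.exp (-β * q.1 / c) * q.1) p := by
    fun_prop
  have h2 : ContinuousAt (fun q : ℝ × ℝ => q.2 / Real.Gamma (1 - q.2)) p :=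
    continuous_snd.continuousAt.div hΓcont hΓne
  have h3 : ContinuousAt (fun q : ℝ × ℝ => (q.1 / c) ^ (-1 - q.2)) p := by
    apply ContinuousAt.rpow
    · exact (continuous_fst.div_const c).continuousAt
    · exact (continuous_const.sub continuous_snd).continuousAt
    · left
      have : 0 < p.1 / c := div_pos hp1 hc
      exact this.ne'
  exact h1.mul (h2.mul h3)

lemma step1 (hβ : 0 < β) (hc : 0 < c) {w : ℝ} (hw : 0 < w) :
    w * rhoMGG10 β c η w = ∫ s in Set.Ioo (0:ℝ) 1, F β c η w s := by
  have : ∫ s in Set.Ioo (0:ℝ) 1, F β c η w s =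
      ((η / c) * Real.exp (-β * w / c) * w) *
        ∫ s in Set.Ioo (0:ℝ) 1, (s / Real.Gamma (1 - s)) * (w / c) ^ (-1 - s) :=
    MeasureTheory.integral_const_mul _ _
  rw [this, ← MeasureTheory.integral_Ioc_eq_integral_Ioo,
    ← intervalIntegral.integral_of_le (by norm_num : (0:ℝ) ≤ 1)]
  rw [rhoMGG10, rhoMSt10]
  ring

end Stmt7Aux

open Stmt7Aux in
theorem stmt_7 (β c η : ℝ) (hβ : 0 < β) (hc : 0 < c) (hη : 0 < η) :
    (β ≠ 1 →
      ∫ w in Set.Ioi (0 : ℝ), w * rhoMGG10 β c η w =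
        η * c * (1 - β + β * Real.log β) / (β * (Real.log β) ^ 2)) ∧
    (β = 1 →
      ∫ w in Set.Ioi (0 : ℝ), w * rhoMGG10 β c η w = η * c / 2) := by
  -- Fubini
  have hmeas : AEStronglyMeasurable (fun p : ℝ × ℝ => F β c η p.1 p.2)
      ((volume.restrict (Set.Ioi (0:ℝ))).prod (volume.restrict (Set.Ioo (0:ℝ) 1))) := by
    rw [Measure.prod_restrict]
    exact (continuousOn_F hβ hc).aestronglyMeasurable
      (measurableSet_Ioi.prod measurableSet_Ioo)
  have hval : ∀ s ∈ Set.Ioo (0:ℝ) 1,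
      (∫ w in Set.Ioi (0:ℝ), ‖F β c η w s‖) = η * c * (s * β ^ (s - 1)) := by
    intro s hs
    rw [setIntegral_congr_fun measurableSet_Ioi
      (fun w hw => Real.norm_of_nonneg (F_nonneg hβ hc hη hs (Set.mem_Ioi.mp hw)))]
    exact integral_F hβ hc hη hs
  have hcont : Continuous (fun s : ℝ => η * c * (s * β ^ (s - 1))) := by
    have : Continuous (fun s : ℝ => β ^ (s - 1)) := by
      have : (fun s : ℝ => β ^ (s - 1)) =
          (fun s : ℝ => Real.exp (Real.log β * (s - 1))) := by
        funext s; rw [Real.rpow_def_of_pos hβ]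
      rw [this]; fun_prop
    fun_prop
  have hintval : IntegrableOn (fun s : ℝ => η * c * (s * β ^ (s - 1)))
      (Set.Ioo (0:ℝ) 1) :=
    (hcont.integrableOn_Icc (a := 0) (b := 1)).mono_set Set.Ioo_subset_Icc_self
  have hInt : Integrable (Function.uncurry (fun w s => F β c η w s))
      ((volume.restrict (Set.Ioi (0:ℝ))).prod (volume.restrict (Set.Ioo (0:ℝ) 1))) := by
    refine (integrable_prod_iff' hmeas).mpr ⟨?_, ?_⟩
    · exact (ae_restrict_iff' measurableSet_Ioo).mpr
        (ae_of_all _ (fun s hs => integrableOn_F hβ hc hs))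
    · exact hintval.congr ((ae_restrict_iff' measurableSet_Ioo).mpr
        (ae_of_all _ (fun s hs => (hval s hs).symm)))
  have hswap : ∫ w in Set.Ioi (0:ℝ), ∫ s in Set.Ioo (0:ℝ) 1, F β c η w s =
      ∫ s in Set.Ioo (0:ℝ) 1, ∫ w in Set.Ioi (0:ℝ), F β c η w s :=
    MeasureTheory.integral_integral_swap hInt
  have hmain : ∫ w in Set.Ioi (0 : ℝ), w * rhoMGG10 β c η w =
      η * c * ∫ s in (0:ℝ)..1, s * β ^ (s - 1) := by
    rw [setIntegral_congr_fun measurableSet_Ioi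
      (fun w hw => step1 hβ hc (Set.mem_Ioi.mp hw)), hswap,
      setIntegral_congr_fun measurableSet_Ioo
      (fun s hs => integral_F hβ hc hη hs)]
    rw [intervalIntegral.integral_of_le (by norm_num : (0:ℝ) ≤ 1),
      MeasureTheory.integral_Ioc_eq_integral_Ioo,
      ← MeasureTheory.integral_const_mul]
  constructor
  · intro hβ1
    set a := Real.log β with ha_def
    have ha : a ≠ 0 := by
      intro h
      apply hβ1
      have := Real.exp_log hβ
      rw [← this, ha_def] at *
      rw [h] at this ⊢
      simpa using this.symm
    have hkey : ∫ s in (0:ℝ)..1, s * β ^ (s - 1) = ((a - 1) + β⁻¹) / a ^ 2 := by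
      have hcongr : ∀ s ∈ Set.uIcc (0:ℝ) 1, s * β ^ (s - 1) =
          s * Real.exp (a * (s - 1)) := by
        intro s _
        rw [Real.rpow_def_of_pos hβ, mul_comm (Real.log β)]
      rw [intervalIntegral.integral_congr hcongr]
      have hderiv : ∀ s ∈ Set.uIcc (0:ℝ) 1,
          HasDerivAt (fun t => Real.exp (a * (t - 1)) * (a * t - 1) / a ^ 2)
            (s * Real.exp (a * (s - 1))) s := by
        intro s _
        have h1 : HasDerivAt (fun t : ℝ => a * (t - 1)) (a * 1) s :=
          (((hasDerivAt_id s).sub_const 1)).const_mul a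
        have h2 := h1.exp
        have h3 : HasDerivAt (fun t : ℝ => a * t - 1) (a * 1) s :=
          ((hasDerivAt_id s).const_mul a).sub_const 1
        have h4 := (h2.mul h3).div_const (a ^ 2)
        refine h4.congr_deriv ?_
        rw [div_eq_iff (pow_ne_zero 2 ha)]
        ring
      rw [intervalIntegral.integral_eq_sub_of_hasDerivAt hderiv
        ((Continuous.intervalIntegrable (by fun_prop) 0 1))]
      have he : Real.exp (-a) = β⁻¹ := by
        rw [ha_def, Real.exp_neg, Real.exp_log hβ]
      rw [show a * ((1:ℝ) - 1) = 0 by ring, show a * ((0:ℝ) - 1) = -a by ring,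
        Real.exp_zero, he]
      ring
    rw [hmain, hkey]
    field_simp
    ring
  · intro hβ1
    subst hβ1
    rw [hmain]
    have : ∫ s in (0:ℝ)..1, s * (1:ℝ) ^ (s - 1) = 1 / 2 := by
      have : ∀ s ∈ Set.uIcc (0:ℝ) 1, s * (1:ℝ) ^ (s - 1) = s := by
        intro s _; rw [Real.one_rpow, mul_one]
      rw [intervalIntegral.integral_congr this, integral_id]
      norm_num
    rw [this]
    ring
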